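/- If a factor of a word S is not s-primitive, then S is not s-primitive. Concretely: if S = P·U·Q and C is a non-trivial s-cover of U, then P·C·Q is a non-trivial s-cover of S. -/
import Mathlib


/-- `C` is an s-cover of `S`: `C` occurs in `S` as a subsequence, and every
position of `S` belongs to some occurrence of `C` as a subsequence, i.e. a
strictly increasing list of positions of `S` spelling `C`. -/
def IsSCover {α : Type*} (C S : List α) : Prop :=
  C.Sublist S ∧
    ∀ i : Fin S.length, ∃ I : List (Fin S.length),
      I.Chain' (fun a b => (a : ℕ) < (b : ℕ)) ∧ i ∈ I ∧ I.map S.get = C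

/-- A word is s-primitive if it has no s-cover strictly shorter than itself. -/
def SPrimitive {α : Type*} (S : List α) : Prop :=
  ∀ C : List α, IsSCover C S → S.length ≤ C.length

private lemma chainCoe (n : ℕ) (I : List (Fin n)) :
    I.Chain' (fun a b => (a : ℕ) < (b : ℕ)) ↔ List.Chain' (· < ·) (I.map Fin.val) := by
  rw [show ((do let a ← I; pure (a : ℕ)) : List ℕ) = I.map Fin.val from
    bind_pure_comp Fin.val I ▸ (List.map_eq_map _ _).symm ▸ rfl]

private lemma glue_scover {α : Type*} (P U Q C : List α) (I : List (Fin U.length))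
    (hch : I.Chain' (fun a b => (a : ℕ) < (b : ℕ)))
    (hmap : I.map U.get = C) :
    ∃ J : List (Fin (P ++ U ++ Q).length),
      J.Chain' (fun a b => (a : ℕ) < (b : ℕ)) ∧
      J.map (P ++ U ++ Q).get = P ++ C ++ Q ∧
      (∀ j : Fin (P ++ U ++ Q).length,
        ((j : ℕ) < P.length ∨ P.length + U.length ≤ (j : ℕ)) → j ∈ J) ∧
      (∀ k ∈ I, ∀ j : Fin (P ++ U ++ Q).length,
        (j : ℕ) = P.length + (k : ℕ) → j ∈ J) := by
  have hn : (P ++ U ++ Q).length = P.length + U.length + Q.length := by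
    simp only [List.length_append]
  rw [chainCoe] at hch
  refine ⟨((List.finRange P.length).map
        (fun j => (⟨j.val, by have := j.isLt; omega⟩ : Fin (P ++ U ++ Q).length)))
      ++ (I.map (fun k => (⟨P.length + k.val, by have := k.isLt; omega⟩ :
          Fin (P ++ U ++ Q).length)))
      ++ ((List.finRange Q.length).map
        (fun j => (⟨P.length + U.length + j.val, by have := j.isLt; omega⟩ :
          Fin (P ++ U ++ Q).length))), ?_, ?_, ?_, ?_⟩
  · -- Chain'
    rw [chainCoe]
    apply List.Pairwise.isChain
    rw [List.map_append, List.map_append, List.map_map, List.map_map, List.map_map,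
      List.pairwise_append, List.pairwise_append]
    have hIpw : I.Pairwise (fun a b : Fin U.length => (a : ℕ) < (b : ℕ)) := by
      have := List.isChain_iff_pairwise.mp hch
      rwa [List.pairwise_map] at this
    refine ⟨⟨?_, ?_, ?_⟩, ?_, ?_⟩
    · exact ((List.pairwise_lt_finRange P.length).map _ (fun a b h => by
        simpa using h))
    · exact (hIpw.map _ (fun a b h => by simpa using h))
    · intro a ha b hb
      simp only [List.mem_map] at ha hb
      obtain ⟨x, -, rfl⟩ := ha
      obtain ⟨y, -, rfl⟩ := hb
      have := x.isLt; simp; omega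
    · exact ((List.pairwise_lt_finRange Q.length).map _ (fun a b h => by
        simpa using h))
    · intro a ha b hb
      rw [List.mem_append] at ha
      simp only [List.mem_map] at ha hb
      obtain ⟨y, -, rfl⟩ := hb
      rcases ha with ⟨x, -, rfl⟩ | ⟨x, -, rfl⟩
      · have := x.isLt; simp; omega
      · have := x.isLt; simp; omega
  · -- map get
    rw [List.map_append, List.map_append, List.map_map, List.map_map, List.map_map]
    congr 1
    congr 1
    · have : ∀ j : Fin P.length,
          ((P ++ U ++ Q).get ∘ (fun j : Fin P.length =>
            (⟨j.val, by have := j.isLt; omega⟩ : Fin (P ++ U ++ Q).length))) j = P.get j := by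
        intro j
        have hj := j.isLt
        simp only [Function.comp_apply, List.get_eq_getElem]
        rw [List.getElem_append_left (by simp; omega), List.getElem_append_left hj]
      rw [List.map_congr_left (fun a _ => this a), List.map_get_finRange]
    · rw [← hmap]
      refine List.map_congr_left (fun k _ => ?_)
      have hk := k.isLt
      simp only [Function.comp_apply, List.get_eq_getElem]
      rw [List.getElem_append_left (by simp only [List.length_append]; omega), List.getElem_append_right (by omega)]
      simp
    · have : ∀ j : Fin Q.length,
          ((P ++ U ++ Q).get ∘ (fun j : Fin Q.length =>
            (⟨P.length + U.length + j.val, by have := j.isLt; omega⟩ :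
              Fin (P ++ U ++ Q).length))) j = Q.get j := by
        intro j
        have hj := j.isLt
        simp only [Function.comp_apply, List.get_eq_getElem]
        rw [List.getElem_append_right (by simp only [List.length_append]; omega)]
        simp
      rw [List.map_congr_left (fun a _ => this a), List.map_get_finRange]
  · -- membership for P and Q parts
    intro j hj
    rw [List.mem_append, List.mem_append]
    rcases hj with hj | hj
    · refine Or.inl (Or.inl ?_)
      simp only [List.mem_map]
      exact ⟨⟨j.val, hj⟩, List.mem_finRange _, by ext; rfl⟩
    · refine Or.inr ?_
      simp only [List.mem_map]
      have hjlt := j.isLt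
      refine ⟨⟨j.val - (P.length + U.length), by omega⟩, List.mem_finRange _, ?_⟩
      ext; simp; omega
  · -- membership for middle part
    intro k hk j hj
    rw [List.mem_append, List.mem_append]
    refine Or.inl (Or.inr ?_)
    simp only [List.mem_map]
    exact ⟨k, hk, by ext; simp [hj]⟩

theorem scover_of_factor_scover {α : Type*} (P U Q C S : List α)
    (hS : S = P ++ U ++ Q) (hC : IsSCover C U) (hlt : C.length < U.length) :
    IsSCover (P ++ C ++ Q) S ∧ (P ++ C ++ Q).length < S.length ∧ ¬ SPrimitive S := by
  subst hS
  have hu : 0 < U.length := Nat.lt_of_le_of_lt (Nat.zero_le _) hlt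
  have hlen : (P ++ C ++ Q).length < (P ++ U ++ Q).length := by
    simp only [List.length_append]; omega
  have hcov : IsSCover (P ++ C ++ Q) (P ++ U ++ Q) := by
    constructor
    · exact ((List.Sublist.refl P).append hC.1).append (List.Sublist.refl Q)
    · intro i
      have hilt := i.isLt
      have hn : (P ++ U ++ Q).length = P.length + U.length + Q.length := by
        simp only [List.length_append]
      by_cases hmid : P.length ≤ (i : ℕ) ∧ (i : ℕ) < P.length + U.length
      · obtain ⟨I, hch, hkI, hmap⟩ := hC.2 ⟨(i : ℕ) - P.length, by omega⟩
        obtain ⟨J, hJch, hJmap, -, hmem⟩ := glue_scover P U Q C I hch hmap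
        exact ⟨J, hJch, hmem _ hkI i (by simp; omega), hJmap⟩
      · obtain ⟨I, hch, -, hmap⟩ := hC.2 ⟨0, hu⟩
        obtain ⟨J, hJch, hJmap, hmem, -⟩ := glue_scover P U Q C I hch hmap
        exact ⟨J, hJch, hmem i (by omega), hJmap⟩
  exact ⟨hcov, hlen, fun h => by have := h _ hcov; omega⟩
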